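/- Let k ≥ 2 be an integer, let p ∈ (0,1) be real, and let T be an integer with 1 ≤ T ≤ k−1. If the derivative with respect to p of the function p ↦ U_{k,1,p}(T) at p is strictly negative, then the derivative with respect to p of the function p ↦ U_{k,1,p}(T+1) at p is also strictly negative. -/

import Mathlib

open Finset

/-- `U_{k,ℓ,p}(T) = T − (k/ℓ)·∑_{t=0}^{T} (T−t)·C(k,t)·p^{ℓ+t}·(1−p)^{k−t}`. -/
noncomputable def Ufun (k ℓ : ℕ) (p : ℝ) (T : ℕ) : ℝ :=
  (T : ℝ) - ((k : ℝ) / (ℓ : ℝ)) * ∑ t ∈ Finset.range (T + 1),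
    ((T : ℝ) - (t : ℝ)) * (Nat.choose k t : ℝ) * p ^ (ℓ + t) * (1 - p) ^ (k - t)

/-- binomial weight -/
noncomputable def bwt (k : ℕ) (p : ℝ) (t : ℕ) : ℝ :=
  (Nat.choose k t : ℝ) * p ^ t * (1 - p) ^ (k - t)

lemma sum_shift0 (G : ℕ → ℝ) (n : ℕ) (h0 : G 0 = 0) (hn : G (n + 1) = 0) :
    ∑ t ∈ Finset.range (n + 1), G (t + 1) = ∑ t ∈ Finset.range (n + 1), G t := by
  have h1 := Finset.sum_range_succ' G (n + 1)
  have h2 := Finset.sum_range_succ G (n + 1)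
  rw [h2, hn, add_zero, h0, add_zero] at h1
  exact h1.symm

lemma abel_id (c : ℕ → ℝ) (N : ℕ) :
    ∑ t ∈ Finset.range (N + 1), ((N : ℝ) - 2 * (t : ℝ)) * c t
      = ∑ s ∈ Finset.range (N + 1), ((s : ℝ) + 1) * ((N : ℝ) - (s : ℝ)) * (c s - c (s + 1)) := by
  have h0 : (fun s : ℕ => (s : ℝ) * ((N : ℝ) + 1 - (s : ℝ)) * c s) 0 = 0 := by simp
  have hn : (fun s : ℕ => (s : ℝ) * ((N : ℝ) + 1 - (s : ℝ)) * c s) (N + 1) = 0 := by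
    push_cast; ring
  have hshift : ∑ s ∈ Finset.range (N + 1), ((s : ℝ) + 1) * ((N : ℝ) - (s : ℝ)) * c (s + 1)
      = ∑ s ∈ Finset.range (N + 1), (s : ℝ) * ((N : ℝ) + 1 - (s : ℝ)) * c s := by
    rw [← sum_shift0 (fun s : ℕ => (s : ℝ) * ((N : ℝ) + 1 - (s : ℝ)) * c s) N h0 hn]
    exact Finset.sum_congr rfl (fun s _ => by push_cast; ring)
  have expand : ∀ s ∈ Finset.range (N + 1), ((s : ℝ) + 1) * ((N : ℝ) - (s : ℝ)) * (c s - c (s + 1))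
      = ((s : ℝ) + 1) * ((N : ℝ) - (s : ℝ)) * c s - ((s : ℝ) + 1) * ((N : ℝ) - (s : ℝ)) * c (s + 1) :=
    fun s _ => by ring
  rw [Finset.sum_congr rfl expand, Finset.sum_sub_distrib, hshift, ← Finset.sum_sub_distrib]
  exact Finset.sum_congr rfl (fun s _ => by ring)

lemma hasDerivAt_Ufun (k N : ℕ) (p : ℝ) :
    HasDerivAt (fun q : ℝ => Ufun k 1 q N)
      (-((k : ℝ) * ∑ t ∈ Finset.range (N + 1), ((N : ℝ) - 2 * (t : ℝ)) * bwt k p t)) p := by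
  have hterm : ∀ t ∈ Finset.range (N + 1),
      HasDerivAt (fun q : ℝ => ((N : ℝ) - (t : ℝ)) * (Nat.choose k t : ℝ) * q ^ (1 + t) * (1 - q) ^ (k - t))
        ((((N : ℝ) - (t : ℝ)) * (Nat.choose k t : ℝ) * (((1 + t : ℕ) : ℝ) * p ^ (1 + t - 1))) * (1 - p) ^ (k - t)
          + (((N : ℝ) - (t : ℝ)) * (Nat.choose k t : ℝ) * p ^ (1 + t)) * (((k - t : ℕ) : ℝ) * (1 - p) ^ (k - t - 1) * (-1))) p := by
    intro t _
    have h1 : HasDerivAt (fun q : ℝ => ((N : ℝ) - (t : ℝ)) * (Nat.choose k t : ℝ) * q ^ (1 + t))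
        (((N : ℝ) - (t : ℝ)) * (Nat.choose k t : ℝ) * (((1 + t : ℕ) : ℝ) * p ^ (1 + t - 1))) p :=
      (hasDerivAt_pow (1 + t) p).const_mul (((N : ℝ) - (t : ℝ)) * (Nat.choose k t : ℝ))
    have hinner : HasDerivAt (fun q : ℝ => 1 - q) (-1 : ℝ) p := by
      simpa using (hasDerivAt_id p).const_sub 1
    have h2 : HasDerivAt (fun q : ℝ => (1 - q) ^ (k - t))
        (((k - t : ℕ) : ℝ) * (1 - p) ^ (k - t - 1) * (-1)) p := by
      have := (hasDerivAt_pow (k - t) (1 - p)).comp p hinner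
      simpa [Function.comp_def] using this
    exact h1.mul h2
  have hS := HasDerivAt.fun_sum hterm
  have hU := (hS.const_mul ((k : ℝ) / ((1 : ℕ) : ℝ))).const_sub (N : ℝ)
  have hU' : HasDerivAt (fun q : ℝ => Ufun k 1 q N)
      (-(((k : ℝ) / ((1 : ℕ) : ℝ)) * ∑ t ∈ Finset.range (N + 1),
        ((((N : ℝ) - (t : ℝ)) * (Nat.choose k t : ℝ) * (((1 + t : ℕ) : ℝ) * p ^ (1 + t - 1))) * (1 - p) ^ (k - t)
          + (((N : ℝ) - (t : ℝ)) * (Nat.choose k t : ℝ) * p ^ (1 + t)) * (((k - t : ℕ) : ℝ) * (1 - p) ^ (k - t - 1) * (-1))))) p := hU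
  convert hU' using 1
  have hsum : ∑ t ∈ Finset.range (N + 1),
      ((((N : ℝ) - (t : ℝ)) * (Nat.choose k t : ℝ) * (((1 + t : ℕ) : ℝ) * p ^ (1 + t - 1))) * (1 - p) ^ (k - t)
        + (((N : ℝ) - (t : ℝ)) * (Nat.choose k t : ℝ) * p ^ (1 + t)) * (((k - t : ℕ) : ℝ) * (1 - p) ^ (k - t - 1) * (-1)))
      = ∑ t ∈ Finset.range (N + 1), ((N : ℝ) - 2 * (t : ℝ)) * bwt k p t := by
    have hstep1 : ∀ t ∈ Finset.range (N + 1),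
        ((((N : ℝ) - (t : ℝ)) * (Nat.choose k t : ℝ) * (((1 + t : ℕ) : ℝ) * p ^ (1 + t - 1))) * (1 - p) ^ (k - t)
          + (((N : ℝ) - (t : ℝ)) * (Nat.choose k t : ℝ) * p ^ (1 + t)) * (((k - t : ℕ) : ℝ) * (1 - p) ^ (k - t - 1) * (-1)))
        = (((N : ℝ) - (t : ℝ)) * (Nat.choose k t : ℝ) * ((1 : ℝ) + (t : ℝ)) * p ^ t * (1 - p) ^ (k - t))
          - (((N : ℝ) + 1 - ((t : ℝ) + 1)) * ((t : ℝ) + 1) * (Nat.choose k (t + 1) : ℝ) * p ^ (t + 1) * (1 - p) ^ (k - (t + 1))) := by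
      intro t _
      have hc : (Nat.choose k (t + 1) : ℝ) * ((t : ℝ) + 1)
          = (Nat.choose k t : ℝ) * ((k - t : ℕ) : ℝ) := by
        exact_mod_cast congrArg (Nat.cast (R := ℝ)) (Nat.choose_succ_right_eq k t)
      rw [show k - t - 1 = k - (t + 1) from by omega,
          show 1 + t - 1 = t from by omega]
      simp only [Nat.cast_add, Nat.cast_one]
      linear_combination (((N : ℝ) - (t : ℝ)) * p ^ (1 + t) * (1 - p) ^ (k - (t + 1))) * hc
    rw [Finset.sum_congr rfl hstep1, Finset.sum_sub_distrib]
    have hG0 : (fun s : ℕ => ((N : ℝ) + 1 - (s : ℝ)) * (s : ℝ) * (Nat.choose k s : ℝ) * p ^ s * (1 - p) ^ (k - s)) 0 = 0 := by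
      simp
    have hGN : (fun s : ℕ => ((N : ℝ) + 1 - (s : ℝ)) * (s : ℝ) * (Nat.choose k s : ℝ) * p ^ s * (1 - p) ^ (k - s)) (N + 1) = 0 := by
      push_cast; ring
    have hshift : ∑ t ∈ Finset.range (N + 1),
        ((N : ℝ) + 1 - ((t : ℝ) + 1)) * ((t : ℝ) + 1) * (Nat.choose k (t + 1) : ℝ) * p ^ (t + 1) * (1 - p) ^ (k - (t + 1))
        = ∑ s ∈ Finset.range (N + 1),
          ((N : ℝ) + 1 - (s : ℝ)) * (s : ℝ) * (Nat.choose k s : ℝ) * p ^ s * (1 - p) ^ (k - s) := by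
      rw [← sum_shift0 (fun s : ℕ => ((N : ℝ) + 1 - (s : ℝ)) * (s : ℝ) * (Nat.choose k s : ℝ) * p ^ s * (1 - p) ^ (k - s)) N hG0 hGN]
      exact Finset.sum_congr rfl (fun s _ => by push_cast; ring)
    rw [hshift, ← Finset.sum_sub_distrib]
    refine Finset.sum_congr rfl (fun t _ => ?_)
    simp only [bwt]
    ring
  rw [hsum]
  norm_num

lemma bwt_pos {k t : ℕ} {p : ℝ} (hp0 : 0 < p) (hp1 : p < 1) (ht : t ≤ k) : 0 < bwt k p t := by
  have h1 : (0 : ℝ) < (Nat.choose k t : ℝ) := by exact_mod_cast Nat.choose_pos ht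
  have h2 : (0 : ℝ) < 1 - p := by linarith
  exact mul_pos (mul_pos h1 (pow_pos hp0 t)) (pow_pos h2 _)

lemma bwt_ident (k s : ℕ) (p : ℝ) (hs : s < k) :
    bwt k p (s + 1) * ((s : ℝ) + 1) * (1 - p) = bwt k p s * ((k - s : ℕ) : ℝ) * p := by
  have hc : (Nat.choose k (s + 1) : ℝ) * ((s : ℝ) + 1)
      = (Nat.choose k s : ℝ) * ((k - s : ℕ) : ℝ) := by
    exact_mod_cast congrArg (Nat.cast (R := ℝ)) (Nat.choose_succ_right_eq k s)
  have hpow : (1 - p) ^ (k - s) = (1 - p) ^ (k - (s + 1)) * (1 - p) := by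
    rw [← pow_succ, show (k - (s + 1)) + 1 = k - s from by omega]
  simp only [bwt]
  linear_combination (p ^ (s + 1) * (1 - p) ^ (k - (s + 1)) * (1 - p)) * hc
    - ((Nat.choose k s : ℝ) * ((k - s : ℕ) : ℝ) * p ^ (s + 1)) * hpow

lemma key_ineq (k : ℕ) (p : ℝ) (hp0 : 0 < p) (hp1 : p < 1) (T : ℕ) (hT1 : 1 ≤ T)
    (hT1k : T + 1 ≤ k)
    (hΦ : 0 < ∑ t ∈ Finset.range (T + 1), ((T : ℝ) - 2 * (t : ℝ)) * bwt k p t) :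
    0 < ∑ t ∈ Finset.range (T + 1 + 1), ((↑(T + 1) : ℝ) - 2 * (t : ℝ)) * bwt k p t := by
  classical
  rw [abel_id (bwt k p) T] at hΦ
  rw [abel_id (bwt k p) (T + 1), Finset.sum_range_succ]
  have hlast : ((↑(T + 1) : ℝ) + 1) * ((↑(T + 1) : ℝ) - (↑(T + 1) : ℝ)) * (bwt k p (T + 1) - bwt k p (T + 1 + 1)) = 0 := by
    simp
  rw [hlast, add_zero]
  have hcast : ∀ s ∈ Finset.range (T + 1),
      ((s : ℝ) + 1) * ((↑(T + 1) : ℝ) - (s : ℝ)) * (bwt k p s - bwt k p (s + 1))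
      = ((s : ℝ) + 1) * (((T : ℝ) + 1) - (s : ℝ)) * (bwt k p s - bwt k p (s + 1)) := by
    intro s _; push_cast; ring
  rw [Finset.sum_congr rfl hcast]
  -- existence of a positive difference
  have hex : ∃ s, s < T ∧ 0 < bwt k p s - bwt k p (s + 1) := by
    by_contra hno
    push_neg at hno
    have hle : ∑ s ∈ Finset.range (T + 1), ((s : ℝ) + 1) * ((T : ℝ) - (s : ℝ)) * (bwt k p s - bwt k p (s + 1)) ≤ 0 := by
      apply Finset.sum_nonpos
      intro s hs
      have hsT : s < T + 1 := Finset.mem_range.mp hs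
      rcases Nat.lt_or_ge s T with h1 | h1
      · have hg : bwt k p s - bwt k p (s + 1) ≤ 0 := hno s h1
        have hsr : (s : ℝ) < (T : ℝ) := by exact_mod_cast h1
        have h2 : (0 : ℝ) ≤ ((s : ℝ) + 1) * ((T : ℝ) - (s : ℝ)) :=
          mul_nonneg (by positivity) (by linarith)
        nlinarith [mul_nonneg h2 (neg_nonneg.2 hg)]
      · have : s = T := by omega
        subst this
        simp
    linarith
  have hm := Nat.find_spec hex
  set m := Nat.find hex with hmdef
  obtain ⟨hmT, hmpos⟩ := hm
  have hmin : ∀ s, s < m → bwt k p s - bwt k p (s + 1) ≤ 0 := by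
    intro s hsm
    have h := Nat.find_min hex hsm
    push_neg at h
    exact h (hsm.trans hmT)
  -- monotone step inequality propagation
  have hQM : ((k - m : ℕ) : ℝ) * p < ((m : ℝ) + 1) * (1 - p) := by
    have hmk : m < k := by omega
    have hid := bwt_ident k m p hmk
    have hbm : 0 < bwt k p m := bwt_pos hp0 hp1 (by omega)
    have hpos : 0 < ((m : ℝ) + 1) * (1 - p) := mul_pos (by positivity) (by linarith)
    nlinarith [hid, hmpos, hbm, hpos]
  have hQ : ∀ s, m ≤ s → ((k - s : ℕ) : ℝ) * p < ((s : ℝ) + 1) * (1 - p) := by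
    intro s hs
    induction s, hs using Nat.le_induction with
    | base => exact hQM
    | succ n hn ih =>
      have h1 : ((k - (n + 1) : ℕ) : ℝ) ≤ ((k - n : ℕ) : ℝ) := by
        exact_mod_cast Nat.sub_le_sub_left (Nat.le_succ n) k
      have h2 : ((k - (n + 1) : ℕ) : ℝ) * p ≤ ((k - n : ℕ) : ℝ) * p :=
        mul_le_mul_of_nonneg_right h1 hp0.le
      have h3 : ((n : ℝ) + 1) * (1 - p) ≤ (((n : ℝ) + 1) + 1) * (1 - p) := by nlinarith
      simp only [Nat.cast_add, Nat.cast_one]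
      linarith
  have hgpos : ∀ s, m ≤ s → s < k → 0 < bwt k p s - bwt k p (s + 1) := by
    intro s hms hsk
    have hid := bwt_ident k s p hsk
    have hq := hQ s hms
    have hbs : 0 < bwt k p s := bwt_pos hp0 hp1 hsk.le
    have hbs1 : 0 < bwt k p (s + 1) := bwt_pos hp0 hp1 hsk
    have hpos : 0 < ((s : ℝ) + 1) * (1 - p) := mul_pos (by positivity) (by linarith)
    nlinarith [hid, mul_lt_mul_of_pos_left hq hbs]
  -- combine
  have hkey : ((T : ℝ) - (m : ℝ)) * (∑ s ∈ Finset.range (T + 1),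
        ((s : ℝ) + 1) * (((T : ℝ) + 1) - (s : ℝ)) * (bwt k p s - bwt k p (s + 1)))
      - ((T : ℝ) + 1 - (m : ℝ)) * (∑ s ∈ Finset.range (T + 1),
        ((s : ℝ) + 1) * ((T : ℝ) - (s : ℝ)) * (bwt k p s - bwt k p (s + 1)))
      = ∑ s ∈ Finset.range (T + 1), ((s : ℝ) + 1) * ((s : ℝ) - (m : ℝ)) * (bwt k p s - bwt k p (s + 1)) := by
    rw [Finset.mul_sum, Finset.mul_sum, ← Finset.sum_sub_distrib]
    exact Finset.sum_congr rfl (fun s _ => by ring)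
  have hnn : 0 ≤ ∑ s ∈ Finset.range (T + 1), ((s : ℝ) + 1) * ((s : ℝ) - (m : ℝ)) * (bwt k p s - bwt k p (s + 1)) := by
    apply Finset.sum_nonneg
    intro s hs
    have hsT : s < T + 1 := Finset.mem_range.mp hs
    rcases Nat.lt_or_ge s m with h1 | h1
    · have hg : bwt k p s - bwt k p (s + 1) ≤ 0 := hmin s h1
      have hsm : (s : ℝ) ≤ (m : ℝ) := by exact_mod_cast h1.le
      nlinarith [mul_nonneg (mul_nonneg (by positivity : (0:ℝ) ≤ (s : ℝ) + 1) (by linarith : (0:ℝ) ≤ (m : ℝ) - (s : ℝ))) (neg_nonneg.2 hg)]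
    · have hg : 0 < bwt k p s - bwt k p (s + 1) := hgpos s h1 (by omega)
      have hsm : (m : ℝ) ≤ (s : ℝ) := by exact_mod_cast h1
      have := mul_nonneg (mul_nonneg (by positivity : (0:ℝ) ≤ (s : ℝ) + 1) (by linarith : (0:ℝ) ≤ (s : ℝ) - (m : ℝ))) hg.le
      linarith [this]
  have hTm : (m : ℝ) < (T : ℝ) := by exact_mod_cast hmT
  have hpos1 : 0 < ((T : ℝ) + 1 - (m : ℝ)) * (∑ s ∈ Finset.range (T + 1),
      ((s : ℝ) + 1) * ((T : ℝ) - (s : ℝ)) * (bwt k p s - bwt k p (s + 1))) :=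
    mul_pos (by linarith) hΦ
  by_contra hcon
  push_neg at hcon
  have h9 : 0 ≤ ((T : ℝ) - (m : ℝ)) * (-(∑ s ∈ Finset.range (T + 1),
      ((s : ℝ) + 1) * (((T : ℝ) + 1) - (s : ℝ)) * (bwt k p s - bwt k p (s + 1)))) :=
    mul_nonneg (by linarith) (by linarith)
  nlinarith [hkey, hnn, hpos1, h9]

theorem deriv_U_neg_propagates (k : ℕ) (hk : 2 ≤ k) (p : ℝ)
    (hp : p ∈ Set.Ioo (0:ℝ) 1) (T : ℕ) (hT1 : 1 ≤ T) (hTk : T ≤ k - 1)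
    (h : deriv (fun q : ℝ => Ufun k 1 q T) p < 0) :
    deriv (fun q : ℝ => Ufun k 1 q (T + 1)) p < 0 := by
  obtain ⟨hp0, hp1⟩ := hp
  have hk0 : (0 : ℝ) < (k : ℝ) := by
    have : 0 < k := by omega
    exact_mod_cast this
  rw [(hasDerivAt_Ufun k T p).deriv] at h
  rw [(hasDerivAt_Ufun k (T + 1) p).deriv]
  have hΦ : 0 < ∑ t ∈ Finset.range (T + 1), ((T : ℝ) - 2 * (t : ℝ)) * bwt k p t := by
    by_contra hcon
    push_neg at hcon
    nlinarith [mul_nonneg hk0.le (neg_nonneg.2 hcon)]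
  have hΨ := key_ineq k p hp0 hp1 T hT1 (by omega) hΦ
  nlinarith [mul_pos hk0 hΨ]
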